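/- Let H ∈ (1/4, 1/2) and let p' ∈ (1/H, 4). Then there exists a constant C, depending only on H and p', such that for every finite increasing sequence of reals t_m < t_{m+1} < ... < t_n one has Σ_{k=m}^{n−1} Σ_{l=m}^{n−1} ρ_H(t_k,t_{k+1}; t_l,t_{l+1})² ≤ C (t_n − t_m)^{4/p'} |D|^{4H − 4/p'}, where |D| = max_{m ≤ k ≤ n−1} (t_{k+1} − t_k). -/

import Mathlib

open Set

/-- Covariance of fractional Brownian increments with Hurst parameter `H`:
`ρ_H(a,b;c,d) = (1/2)(|d−a|^{2H} + |c−b|^{2H} − |c−a|^{2H} − |d−b|^{2H})`,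
i.e. `E((W_b − W_a)(W_d − W_c))`. -/
noncomputable def fbmCov (H a b c d : ℝ) : ℝ :=
  (|d - a| ^ (2 * H) + |c - b| ^ (2 * H) - |c - a| ^ (2 * H) - |d - b| ^ (2 * H)) / 2

/-- Second-difference inequality for the concave function `x ↦ x^p`, `0 < p ≤ 1`. -/
lemma rpow_second_diff {p x u v : ℝ} (hp0 : 0 < p) (hp1 : p ≤ 1)
    (hx : 0 ≤ x) (hu : 0 ≤ u) (hv : 0 ≤ v) :
    (x + u + v) ^ p + x ^ p ≤ (x + u) ^ p + (x + v) ^ p := by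
  rcases eq_or_lt_of_le (add_nonneg hu hv) with hs | hs
  · have hu0 : u = 0 := by linarith
    have hv0 : v = 0 := by linarith
    simp [hu0, hv0]
  · set s := u + v with hsdef
    have hcc := Real.concaveOn_rpow hp0.le hp1
    have hxs : (0:ℝ) ≤ x + s := by linarith
    have hvus : v + u = s := by rw [hsdef]; ring
    have huvs : u + v = s := hsdef.symm
    have hone : v / s + u / s = 1 := by rw [← add_div, hvus]; exact div_self hs.ne'
    have hone' : u / s + v / s = 1 := by rw [← add_div, huvs]; exact div_self hs.ne'
    have h1 : (v / s) • x + (u / s) • (x + s) = x + u := by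
      rw [smul_eq_mul, smul_eq_mul, mul_add, ← add_assoc, ← add_mul, ← add_div, hvus,
        div_self hs.ne', one_mul, div_mul_cancel₀ u hs.ne']
    have h2 : (u / s) • x + (v / s) • (x + s) = x + v := by
      rw [smul_eq_mul, smul_eq_mul, mul_add, ← add_assoc, ← add_mul, ← add_div, huvs,
        div_self hs.ne', one_mul, div_mul_cancel₀ v hs.ne']
    have key1 := hcc.2 (mem_Ici.mpr hx) (mem_Ici.mpr hxs)
      (div_nonneg hv hs.le) (div_nonneg hu hs.le) hone
    have key2 := hcc.2 (mem_Ici.mpr hx) (mem_Ici.mpr hxs)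
      (div_nonneg hu hs.le) (div_nonneg hv hs.le) hone'
    rw [h1] at key1
    rw [h2] at key2
    simp only [smul_eq_mul] at key1 key2
    have hA : v / s * x ^ p + u / s * x ^ p = x ^ p := by
      rw [← add_mul, hone, one_mul]
    have hB : u / s * (x + s) ^ p + v / s * (x + s) ^ p = (x + s) ^ p := by
      rw [← add_mul, hone', one_mul]
    have hxuv : x + u + v = x + s := by rw [hsdef]; ring
    rw [hxuv]
    linarith

/-- Subadditivity of `x ↦ x^p` on nonnegatives, `0 < p ≤ 1`. -/
lemma rpow_subadd {p u v : ℝ} (hp0 : 0 < p) (hp1 : p ≤ 1) (hu : 0 ≤ u) (hv : 0 ≤ v) :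
    (u + v) ^ p ≤ u ^ p + v ^ p := by
  have h := rpow_second_diff (x := 0) hp0 hp1 le_rfl hu hv
  simpa [Real.zero_rpow hp0.ne'] using h

/-- Superadditivity of `x ↦ x^q` on nonnegatives for `q ≥ 1`. -/
lemma rpow_superadd {q x y : ℝ} (hq : 1 ≤ q) (hx : 0 ≤ x) (hy : 0 ≤ y) :
    x ^ q + y ^ q ≤ (x + y) ^ q := by
  have h := NNReal.add_rpow_le_rpow_add x.toNNReal y.toNNReal hq
  rw [← Real.coe_toNNReal x hx, ← Real.coe_toNNReal y hy]
  exact_mod_cast h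

lemma fbmCov_self {H : ℝ} (hH : 0 < H) (a b : ℝ) (hab : a ≤ b) :
    fbmCov H a b a b = (b - a) ^ (2 * H) := by
  have h2H : (2 * H) ≠ 0 := by positivity
  rw [fbmCov]
  simp only [sub_self, abs_zero, Real.zero_rpow h2H, abs_sub_comm a b,
    abs_of_nonneg (sub_nonneg.mpr hab)]
  ring

lemma fbmCov_diag (H a b c : ℝ) : fbmCov H a b c c = 0 := by
  simp only [fbmCov]
  ring

lemma fbmCov_add (H a b c d e : ℝ) :
    fbmCov H a b c d + fbmCov H a b d e = fbmCov H a b c e := by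
  simp only [fbmCov]
  ring

/-- Disjoint increments of fBm with `H ≤ 1/2` are nonpositively correlated. -/
lemma fbmCov_nonpos {H a b c d : ℝ} (hp0 : 0 < 2 * H) (hp1 : 2 * H ≤ 1)
    (hab : a ≤ b) (hbc : b ≤ c) (hcd : c ≤ d) : fbmCov H a b c d ≤ 0 := by
  have key := rpow_second_diff (x := c - b) (u := b - a) (v := d - c) hp0 hp1
    (by linarith) (by linarith) (by linarith)
  rw [fbmCov, abs_of_nonneg (by linarith : (0:ℝ) ≤ d - a),
    abs_of_nonneg (by linarith : (0:ℝ) ≤ c - b),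
    abs_of_nonneg (by linarith : (0:ℝ) ≤ c - a),
    abs_of_nonneg (by linarith : (0:ℝ) ≤ d - b)]
  have e1 : d - a = c - b + (b - a) + (d - c) := by ring
  have e2 : c - a = c - b + (b - a) := by ring
  have e3 : d - b = c - b + (d - c) := by ring
  rw [e1, e2, e3]
  linarith

/-- If `[a,b] ⊆ [c,d]` then the covariance is nonnegative. -/
lemma fbmCov_nonneg {H a b c d : ℝ} (hp0 : 0 < 2 * H)
    (hca : c ≤ a) (hab : a ≤ b) (hbd : b ≤ d) : 0 ≤ fbmCov H a b c d := by
  rw [fbmCov, abs_of_nonneg (by linarith : (0:ℝ) ≤ d - a),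
    abs_of_nonpos (by linarith : c - b ≤ 0),
    abs_of_nonpos (by linarith : c - a ≤ 0),
    abs_of_nonneg (by linarith : (0:ℝ) ≤ d - b)]
  have h1 : (d - b) ^ (2*H) ≤ (d - a) ^ (2*H) :=
    Real.rpow_le_rpow (by linarith) (by linarith) hp0.le
  have h2 : (-(c - a)) ^ (2*H) ≤ (-(c - b)) ^ (2*H) :=
    Real.rpow_le_rpow (by linarith) (by linarith) hp0.le
  linarith

/-- When the second interval is to the right of the first,
`-ρ ≤ (b-a)^{2H}`. -/
lemma fbmCov_neg_le_right {H a b c d : ℝ} (hp0 : 0 < 2 * H) (hp1 : 2 * H ≤ 1)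
    (hab : a ≤ b) (hbc : b ≤ c) (hcd : c ≤ d) :
    -fbmCov H a b c d ≤ (b - a) ^ (2 * H) := by
  rw [fbmCov, abs_of_nonneg (by linarith : (0:ℝ) ≤ d - a),
    abs_of_nonneg (by linarith : (0:ℝ) ≤ c - b),
    abs_of_nonneg (by linarith : (0:ℝ) ≤ c - a),
    abs_of_nonneg (by linarith : (0:ℝ) ≤ d - b)]
  have h1 : (c - a) ^ (2*H) ≤ (c - b) ^ (2*H) + (b - a) ^ (2*H) := by
    have := rpow_subadd (u := c - b) (v := b - a) hp0 hp1 (by linarith) (by linarith)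
    have e : c - b + (b - a) = c - a := by ring
    rwa [e] at this
  have h2 : (d - b) ^ (2*H) ≤ (d - a) ^ (2*H) :=
    Real.rpow_le_rpow (by linarith) (by linarith) hp0.le
  have h3 : (0:ℝ) ≤ (b - a) ^ (2*H) := Real.rpow_nonneg (by linarith) _
  linarith

/-- When the second interval is to the left of the first,
`-ρ ≤ (b-a)^{2H}`. -/
lemma fbmCov_neg_le_left {H a b c d : ℝ} (hp0 : 0 < 2 * H) (hp1 : 2 * H ≤ 1)
    (hcd : c ≤ d) (hda : d ≤ a) (hab : a ≤ b) :
    -fbmCov H a b c d ≤ (b - a) ^ (2 * H) := by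
  rw [fbmCov, abs_of_nonpos (by linarith : d - a ≤ 0),
    abs_of_nonpos (by linarith : c - b ≤ 0),
    abs_of_nonpos (by linarith : c - a ≤ 0),
    abs_of_nonpos (by linarith : d - b ≤ 0)]
  have h1 : (-(d - b)) ^ (2*H) ≤ (-(d - a)) ^ (2*H) + (b - a) ^ (2*H) := by
    have := rpow_subadd (u := -(d - a)) (v := b - a) hp0 hp1 (by linarith) (by linarith)
    have e : -(d - a) + (b - a) = -(d - b) := by ring
    rwa [e] at this
  have h2 : (-(c - a)) ^ (2*H) ≤ (-(c - b)) ^ (2*H) :=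
    Real.rpow_le_rpow (by linarith) (by linarith) hp0.le
  have h3 : (0:ℝ) ≤ (b - a) ^ (2*H) := Real.rpow_nonneg (by linarith) _
  linarith

/-- Monotonicity of the subdivision points. -/
lemma subdiv_mono {m n : ℕ} {t : ℕ → ℝ}
    (ht : ∀ k, m ≤ k → k < n → t k < t (k + 1)) :
    ∀ i j, m ≤ i → i ≤ j → j ≤ n → t i ≤ t j := by
  intro i j hmi hij hjn
  induction j, hij using Nat.le_induction with
  | base => exact le_rfl
  | succ j hij ih =>
    have h1 : t i ≤ t j := ih (by omega)
    have h2 : t j < t (j + 1) := ht j (by omega) (by omega)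
    linarith

/-- Telescoping: sum of covariances against the whole interval. -/
lemma sum_fbmCov_telescope (H a b : ℝ) {m : ℕ} (t : ℕ → ℝ) :
    ∀ j, m ≤ j → ∑ l ∈ Finset.Ico m j, fbmCov H a b (t l) (t (l + 1)) =
      fbmCov H a b (t m) (t j) := by
  intro j hj
  induction j, hj using Nat.le_induction with
  | base => simp [fbmCov_diag]
  | succ j hj ih =>
    rw [Finset.sum_Ico_succ_top hj, ih, fbmCov_add]

/-- Telescoping sum of increments. -/
lemma sum_increments {m : ℕ} (t : ℕ → ℝ) :
    ∀ j, m ≤ j → ∑ l ∈ Finset.Ico m j, (t (l + 1) - t l) = t j - t m := by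
  intro j hj
  induction j, hj using Nat.le_induction with
  | base => simp
  | succ j hj ih =>
    rw [Finset.sum_Ico_succ_top hj, ih]; ring

/-- Superadditivity of `x ↦ x^q` over a sum, `q ≥ 1`. -/
lemma sum_rpow_le_rpow_sum {q : ℝ} (hq : 1 ≤ q) {m n : ℕ} (f : ℕ → ℝ)
    (hf : ∀ k, m ≤ k → k < n → 0 ≤ f k) (hmn : m ≤ n) :
    ∑ k ∈ Finset.Ico m n, (f k) ^ q ≤ (∑ k ∈ Finset.Ico m n, f k) ^ q := by
  have key : ∀ j, m ≤ j → j ≤ n →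
      ∑ k ∈ Finset.Ico m j, (f k) ^ q ≤ (∑ k ∈ Finset.Ico m j, f k) ^ q := by
    intro j hj
    induction j, hj using Nat.le_induction with
    | base => intro _; simp [Real.zero_rpow (by linarith : q ≠ 0)]
    | succ j hj ih =>
      intro hjn
      have ihj := ih (by omega)
      have hfj : 0 ≤ f j := hf j hj (by omega)
      have hsum : 0 ≤ ∑ k ∈ Finset.Ico m j, f k :=
        Finset.sum_nonneg fun k hk => by
          obtain ⟨h1, h2⟩ := Finset.mem_Ico.mp hk
          exact hf k h1 (by omega)
      rw [Finset.sum_Ico_succ_top hj, Finset.sum_Ico_succ_top hj]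
      calc ∑ k ∈ Finset.Ico m j, f k ^ q + f j ^ q
          ≤ (∑ k ∈ Finset.Ico m j, f k) ^ q + f j ^ q := by linarith
        _ ≤ (∑ k ∈ Finset.Ico m j, f k + f j) ^ q := rpow_superadd hq hsum hfj
  exact key n hmn le_rfl

/-- Symmetry of the covariance. -/
lemma fbmCov_comm (H a b c d : ℝ) : fbmCov H a b c d = fbmCov H c d a b := by
  rw [fbmCov, fbmCov, abs_sub_comm d a, abs_sub_comm c b, abs_sub_comm c a, abs_sub_comm d b]
  ring

/-- For `H ∈ (1/4,1/2)` and `p' ∈ (1/H,4)` there is a constant `C = C(H,p')` such that for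
every subdivision `t_m < … < t_n`,
`Σ_{k,l} ρ_H(t_k,t_{k+1};t_l,t_{l+1})² ≤ C (t_n−t_m)^{4/p'} |D|^{4H−4/p'}`
where `|D|` is the mesh of the subdivision. -/
theorem fbmCov_subdivision_sq_sum_le (H p' : ℝ)
    (hH : H ∈ Ioo (1 / 4 : ℝ) (1 / 2)) (hp' : p' ∈ Ioo (1 / H) 4) :
    ∃ C : ℝ, ∀ (m n : ℕ) (hmn : m < n) (t : ℕ → ℝ),
      (∀ k, m ≤ k → k < n → t k < t (k + 1)) →
      ∑ k ∈ Finset.Ico m n, ∑ l ∈ Finset.Ico m n,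
          (fbmCov H (t k) (t (k + 1)) (t l) (t (l + 1))) ^ 2 ≤
        C * (t n - t m) ^ (4 / p') *
          ((Finset.Ico m n).sup' (Finset.nonempty_Ico.mpr hmn)
              fun k => t (k + 1) - t k) ^ (4 * H - 4 / p') := by
  obtain ⟨hH1, hH2⟩ := hH
  obtain ⟨hp'1, hp'2⟩ := hp'
  have hHpos : (0:ℝ) < H := by linarith
  have hp0 : (0:ℝ) < 2 * H := by linarith
  have hp1 : 2 * H ≤ 1 := by linarith
  have hp'pos : (0:ℝ) < p' := lt_trans (by positivity) hp'1
  have hq1 : 1 ≤ 4 / p' := by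
    rw [le_div_iff₀ hp'pos]; linarith
  have hq2 : 0 ≤ 4 * H - 4 / p' := by
    have h1 : 1 < p' * H := by
      have := (div_lt_iff₀ hHpos).mp hp'1
      linarith
    have : 4 / p' < 4 * H := by
      rw [div_lt_iff₀ hp'pos]; nlinarith
    linarith
  refine ⟨2, ?_⟩
  intro m n hmn t ht
  set δ := (Finset.Ico m n).sup' (Finset.nonempty_Ico.mpr hmn)
    (fun k => t (k + 1) - t k) with hδdef
  have hmono := subdiv_mono ht
  have hmem_m : m ∈ Finset.Ico m n := Finset.mem_Ico.mpr ⟨le_rfl, hmn⟩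
  have hδpos : 0 < δ := by
    have h := Finset.le_sup' (fun k => t (k + 1) - t k) hmem_m
    exact lt_of_lt_of_le (sub_pos.mpr (ht m le_rfl hmn)) h
  -- row bound
  have row : ∀ k ∈ Finset.Ico m n,
      ∑ l ∈ Finset.Ico m n, (fbmCov H (t k) (t (k + 1)) (t l) (t (l + 1))) ^ 2 ≤
        2 * ((t (k + 1) - t k) ^ (4 / p') * δ ^ (4 * H - 4 / p')) := by
    intro k hk
    obtain ⟨hk1, hk2⟩ := Finset.mem_Ico.mp hk
    set a := t k with ha
    set b := t (k + 1) with hb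
    have hΔ : 0 < b - a := sub_pos.mpr (ht k hk1 hk2)
    have habk : a ≤ b := by linarith
    have hΔp : (0:ℝ) ≤ (b - a) ^ (2 * H) := Real.rpow_nonneg hΔ.le _
    set g : ℕ → ℝ := fun l =>
      if l = k then (b - a) ^ (2 * H) else -(fbmCov H a b (t l) (t (l + 1))) with hg
    have hself : fbmCov H a b a b = (b - a) ^ (2 * H) := fbmCov_self hHpos a b habk
    have key : ∀ l ∈ Finset.Ico m n,
        (fbmCov H a b (t l) (t (l + 1))) ^ 2 ≤ (b - a) ^ (2 * H) * g l := by
      intro l hl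
      obtain ⟨hl1, hl2⟩ := Finset.mem_Ico.mp hl
      by_cases hlk : l = k
      · rw [hg]
        simp only [if_pos hlk]
        rw [hlk, ← ha, ← hb, hself, sq]
      · rw [hg]
        simp only [if_neg hlk]
        rcases lt_or_gt_of_ne hlk with hlt | hgt
        · -- l < k : second interval to the left of [a,b]
          have h1 : t l ≤ t (l + 1) := (ht l hl1 hl2).le
          have h2 : t (l + 1) ≤ a := hmono (l + 1) k (by omega) (by omega) (by omega)
          have hab : a ≤ b := habk
          have hneg : fbmCov H a b (t l) (t (l + 1)) ≤ 0 := by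
            rw [fbmCov_comm]
            exact fbmCov_nonpos hp0 hp1 h1 h2 hab
          have hle : -(fbmCov H a b (t l) (t (l + 1))) ≤ (b - a) ^ (2 * H) :=
            fbmCov_neg_le_left hp0 hp1 h1 h2 hab
          have := mul_le_mul_of_nonneg_right hle (neg_nonneg.mpr hneg)
          nlinarith [this]
        · -- k < l : second interval to the right of [a,b]
          have h1 : b ≤ t l := hmono (k + 1) l (by omega) (by omega) (by omega)
          have h2 : t l ≤ t (l + 1) := (ht l hl1 hl2).le
          have hab : a ≤ b := habk
          have hneg : fbmCov H a b (t l) (t (l + 1)) ≤ 0 :=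
            fbmCov_nonpos hp0 hp1 hab h1 h2
          have hle : -(fbmCov H a b (t l) (t (l + 1))) ≤ (b - a) ^ (2 * H) :=
            fbmCov_neg_le_right hp0 hp1 hab h1 h2
          have := mul_le_mul_of_nonneg_right hle (neg_nonneg.mpr hneg)
          nlinarith [this]
    have hsum_g : ∑ l ∈ Finset.Ico m n, g l ≤ 2 * (b - a) ^ (2 * H) := by
      have e1 := Finset.add_sum_erase (Finset.Ico m n) g hk
      have e2 : ∑ l ∈ (Finset.Ico m n).erase k, g l =
          ∑ l ∈ (Finset.Ico m n).erase k, -(fbmCov H a b (t l) (t (l + 1))) :=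
        Finset.sum_congr rfl fun l hl => by
          rw [hg]; simp only [if_neg (Finset.ne_of_mem_erase hl)]
      have e3 := Finset.add_sum_erase (Finset.Ico m n)
        (fun l => fbmCov H a b (t l) (t (l + 1))) hk
      have e4 : ∑ l ∈ (Finset.Ico m n).erase k, -(fbmCov H a b (t l) (t (l + 1))) =
          -∑ l ∈ (Finset.Ico m n).erase k, fbmCov H a b (t l) (t (l + 1)) := by
        rw [Finset.sum_neg_distrib]
      have htel : ∑ l ∈ Finset.Ico m n, fbmCov H a b (t l) (t (l + 1)) =
          fbmCov H a b (t m) (t n) := sum_fbmCov_telescope H a b t n hmn.le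
      have hnn : 0 ≤ fbmCov H a b (t m) (t n) :=
        fbmCov_nonneg hp0 (hmono m k le_rfl hk1 (by omega))
          habk (hmono (k + 1) n (by omega) (by omega) le_rfl)
      have hgk : g k = (b - a) ^ (2 * H) := by rw [hg]; simp
      have hfk : (fun l => fbmCov H a b (t l) (t (l + 1))) k = (b - a) ^ (2 * H) := by
        simp only [← ha, ← hb, hself]
      rw [hgk] at e1
      rw [show fbmCov H a b (t k) (t (k + 1)) = (b - a) ^ (2 * H) from hfk] at e3
      rw [e2, e4] at e1
      linarith
    calc ∑ l ∈ Finset.Ico m n, (fbmCov H a b (t l) (t (l + 1))) ^ 2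
        ≤ ∑ l ∈ Finset.Ico m n, (b - a) ^ (2 * H) * g l := Finset.sum_le_sum key
      _ = (b - a) ^ (2 * H) * ∑ l ∈ Finset.Ico m n, g l := by rw [Finset.mul_sum]
      _ ≤ (b - a) ^ (2 * H) * (2 * (b - a) ^ (2 * H)) :=
          mul_le_mul_of_nonneg_left hsum_g hΔp
      _ = 2 * ((b - a) ^ (2 * H) * (b - a) ^ (2 * H)) := by ring
      _ = 2 * ((b - a) ^ (4 / p') * (b - a) ^ (4 * H - 4 / p')) := by
          rw [← Real.rpow_add hΔ, ← Real.rpow_add hΔ,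
            show 2 * H + 2 * H = 4 / p' + (4 * H - 4 / p') by ring]
      _ ≤ 2 * ((b - a) ^ (4 / p') * δ ^ (4 * H - 4 / p')) := by
          have hΔδ : b - a ≤ δ := Finset.le_sup' (fun k => t (k + 1) - t k) hk
          have h5 : (b - a) ^ (4 * H - 4 / p') ≤ δ ^ (4 * H - 4 / p') :=
            Real.rpow_le_rpow hΔ.le hΔδ hq2
          have h4 : (0:ℝ) ≤ (b - a) ^ (4 / p') := Real.rpow_nonneg hΔ.le _
          nlinarith [h5, h4]
  -- sum the rows
  have total := Finset.sum_le_sum row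
  have hsum1 : ∑ k ∈ Finset.Ico m n, (t (k + 1) - t k) ^ (4 / p') ≤
      (t n - t m) ^ (4 / p') := by
    have h := sum_rpow_le_rpow_sum hq1 (fun k => t (k + 1) - t k)
      (fun k h1 h2 => (sub_pos.mpr (ht k h1 h2)).le) hmn.le
    rwa [sum_increments t n hmn.le] at h
  have hδq : (0:ℝ) ≤ δ ^ (4 * H - 4 / p') := Real.rpow_nonneg hδpos.le _
  calc ∑ k ∈ Finset.Ico m n, ∑ l ∈ Finset.Ico m n,
        (fbmCov H (t k) (t (k + 1)) (t l) (t (l + 1))) ^ 2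
      ≤ ∑ k ∈ Finset.Ico m n,
          2 * ((t (k + 1) - t k) ^ (4 / p') * δ ^ (4 * H - 4 / p')) := total
    _ = 2 * δ ^ (4 * H - 4 / p') * ∑ k ∈ Finset.Ico m n, (t (k + 1) - t k) ^ (4 / p') := by
        rw [Finset.mul_sum]
        exact Finset.sum_congr rfl fun k _ => by ring
    _ ≤ 2 * δ ^ (4 * H - 4 / p') * (t n - t m) ^ (4 / p') :=
        mul_le_mul_of_nonneg_left hsum1 (by positivity)
    _ = 2 * (t n - t m) ^ (4 / p') * δ ^ (4 * H - 4 / p') := by ring
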